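/- There exists an automorphism of the group K sending a ↦ b^(−r)·c^(−1), b ↦ a^r·b^(−r)·c^r, c ↦ c^r, and h ↦ h·c^(−r). -/

import Mathlib

/-- The group `K = (ZMod n)³ ⋊ Z₃`, where the generator of `Z₃` acts on `(ZMod n)³`
by scalar multiplication by `r`.  An element is a pair `⟨v, t⟩` with
`v ∈ (ZMod n)³` and `t ∈ ZMod 3`; multiplication is
`⟨v, i⟩ * ⟨w, j⟩ = ⟨r^j • v + w, i + j⟩`, so that with `a = ⟨(1,0,0),0⟩`,
`b = ⟨(0,1,0),0⟩`, `c = ⟨(0,0,1),0⟩`, `h = ⟨0,1⟩` the presentation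
`aⁿ = bⁿ = cⁿ = h³ = [a,b] = [a,c] = [b,c] = 1`, `h⁻¹ah = a^r`, `h⁻¹bh = b^r`,
`h⁻¹ch = c^r` holds. -/
@[ext]
structure Kgrp (n : ℕ) (r : ZMod n) (hr : r ^ 2 + r + 1 = 0) : Type where
  v : ZMod n × ZMod n × ZMod n
  t : ZMod 3

namespace Kgrp

variable {n : ℕ} {r : ZMod n} {hr : r ^ 2 + r + 1 = 0}

instance : Mul (Kgrp n r hr) :=
  ⟨fun x y => ⟨(r ^ y.t.val) • x.v + y.v, x.t + y.t⟩⟩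

instance : One (Kgrp n r hr) := ⟨⟨0, 0⟩⟩

instance : Inv (Kgrp n r hr) :=
  ⟨fun x => ⟨-((r ^ (-x.t).val) • x.v), -x.t⟩⟩

@[simp] lemma mul_def (x y : Kgrp n r hr) :
    x * y = ⟨(r ^ y.t.val) • x.v + y.v, x.t + y.t⟩ := rfl

@[simp] lemma one_def : (1 : Kgrp n r hr) = ⟨0, 0⟩ := rfl

@[simp] lemma inv_def (x : Kgrp n r hr) :
    x⁻¹ = ⟨-((r ^ (-x.t).val) • x.v), -x.t⟩ := rfl

lemma r_cube (hr : r ^ 2 + r + 1 = 0) : r ^ 3 = 1 := by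
  linear_combination (r - 1) * hr

lemma r_pow_val_add (hr : r ^ 2 + r + 1 = 0) (i j : ZMod 3) :
    r ^ i.val * r ^ j.val = r ^ (i + j).val := by
  have h3 : r ^ 3 = 1 := r_cube hr
  have hval : (i + j).val = (i.val + j.val) % 3 := ZMod.val_add i j
  rw [hval, ← pow_add]
  conv_lhs => rw [← Nat.mod_add_div (i.val + j.val) 3]
  rw [pow_add, pow_mul, h3, one_pow, mul_one]

instance : Group (Kgrp n r hr) :=
  Group.ofLeftAxioms
    (fun x y z => by
      have hs : r ^ z.t.val * r ^ y.t.val = r ^ (y.t + z.t).val := by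
        rw [r_pow_val_add hr, add_comm]
      refine Kgrp.ext ?_ ?_
      · show r ^ z.t.val • ((r ^ y.t.val) • x.v + y.v) + z.v =
            r ^ (y.t + z.t).val • x.v + ((r ^ z.t.val) • y.v + z.v)
        rw [smul_add, smul_smul, hs, add_assoc]
      · show x.t + y.t + z.t = x.t + (y.t + z.t)
        exact add_assoc _ _ _)
    (fun x => by
      refine Kgrp.ext ?_ ?_
      · show r ^ x.t.val • (0 : ZMod n × ZMod n × ZMod n) + x.v = x.v
        rw [smul_zero, zero_add]
      · show 0 + x.t = x.t
        exact zero_add _)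
    (fun x => by
      have hs : r ^ x.t.val * r ^ (-x.t).val = 1 := by
        rw [r_pow_val_add hr]
        simp
      refine Kgrp.ext ?_ ?_
      · show r ^ x.t.val • (-(r ^ (-x.t).val • x.v)) + x.v = 0
        rw [smul_neg, smul_smul, hs, one_smul, neg_add_cancel]
      · show -x.t + x.t = 0
        exact neg_add_cancel _)

/-- The generator `a = ((1,0,0),0)` of `K`. -/
def gena (n : ℕ) (r : ZMod n) (hr : r ^ 2 + r + 1 = 0) : Kgrp n r hr := ⟨(1, 0, 0), 0⟩

/-- The generator `b = ((0,1,0),0)` of `K`. -/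
def genb (n : ℕ) (r : ZMod n) (hr : r ^ 2 + r + 1 = 0) : Kgrp n r hr := ⟨(0, 1, 0), 0⟩

/-- The generator `c = ((0,0,1),0)` of `K`. -/
def genc (n : ℕ) (r : ZMod n) (hr : r ^ 2 + r + 1 = 0) : Kgrp n r hr := ⟨(0, 0, 1), 0⟩

/-- The generator `h = ((0,0,0),1)` of `K`. -/
def genh (n : ℕ) (r : ZMod n) (hr : r ^ 2 + r + 1 = 0) : Kgrp n r hr := ⟨(0, 0, 0), 1⟩

end Kgrp

namespace Kgrp

variable {n : ℕ} {r : ZMod n} {hr : r ^ 2 + r + 1 = 0}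

/-- cocycle value function for the automorphism `φ`. -/
def fv (r : ZMod n) : ZMod 3 → ZMod n := ![0, -r, 1]

/-- cocycle value function for `φ⁻¹`. -/
def gv (r : ZMod n) : ZMod 3 → ZMod n := ![0, 1, r + 1]

lemma z11 : (1 : ZMod 3) + 1 = 2 := rfl
lemma z12 : (1 : ZMod 3) + 2 = 0 := rfl
lemma z21 : (2 : ZMod 3) + 1 = 0 := rfl
lemma z22 : (2 : ZMod 3) + 2 = 1 := rfl

lemma fv_cocycle (hr : r ^ 2 + r + 1 = 0) (i j : ZMod 3) :
    fv r (i + j) = r ^ j.val * fv r i + fv r j := by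
  rcases (by decide : ∀ x : ZMod 3, x = 0 ∨ x = 1 ∨ x = 2) i with rfl | rfl | rfl <;>
    rcases (by decide : ∀ x : ZMod 3, x = 0 ∨ x = 1 ∨ x = 2) j with rfl | rfl | rfl <;>
    simp [fv, show (0 : ZMod 3).val = 0 from rfl, show (1 : ZMod 3).val = 1 from rfl,
      show (2 : ZMod 3).val = 2 from rfl, z11, z12, z21, z22] <;>
    first
      | ring1
      | linear_combination hr
      | linear_combination -hr
      | linear_combination (r - 1) * hr
      | linear_combination (1 - r) * hr
      | linear_combination r * hr
      | linear_combination (-r) * hr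

lemma gv_fv (hr : r ^ 2 + r + 1 = 0) (t : ZMod 3) :
    -((r + 1) * fv r t) + gv r t = 0 := by
  fin_cases t <;> simp [fv, gv] <;>
    first | ring1 | linear_combination hr | linear_combination -hr

lemma fv_gv (hr : r ^ 2 + r + 1 = 0) (t : ZMod 3) :
    r * gv r t + fv r t = 0 := by
  fin_cases t <;> simp [fv, gv] <;>
    first | ring1 | linear_combination hr | linear_combination -hr

/-- The forward map of the automorphism. -/
def phiFun (x : Kgrp n r hr) : Kgrp n r hr :=
  ⟨(r * x.v.2.1, -(r * x.v.1) - r * x.v.2.1,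
    -x.v.1 + r * x.v.2.1 + r * x.v.2.2 + fv r x.t), x.t⟩

/-- The inverse map of the automorphism. -/
def psiFun (x : Kgrp n r hr) : Kgrp n r hr :=
  ⟨((r + 1) * (x.v.1 + x.v.2.1), -((r + 1) * x.v.1),
    x.v.1 - r * x.v.2.1 - (r + 1) * x.v.2.2 + gv r x.t), x.t⟩

lemma psi_phi (x : Kgrp n r hr) : psiFun (phiFun x) = x := by
  refine Kgrp.ext ?_ rfl
  show ((r + 1) * (r * x.v.2.1 + (-(r * x.v.1) - r * x.v.2.1)),
    -((r + 1) * (r * x.v.2.1)),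
    r * x.v.2.1 - r * (-(r * x.v.1) - r * x.v.2.1)
      - (r + 1) * (-x.v.1 + r * x.v.2.1 + r * x.v.2.2 + fv r x.t) + gv r x.t) = x.v
  refine Prod.ext ?_ (Prod.ext ?_ ?_)
  · show (r + 1) * (r * x.v.2.1 + (-(r * x.v.1) - r * x.v.2.1)) = x.v.1
    linear_combination (-x.v.1) * hr
  · show -((r + 1) * (r * x.v.2.1)) = x.v.2.1
    linear_combination (-x.v.2.1) * hr
  · show r * x.v.2.1 - r * (-(r * x.v.1) - r * x.v.2.1)
      - (r + 1) * (-x.v.1 + r * x.v.2.1 + r * x.v.2.2 + fv r x.t) + gv r x.t = x.v.2.2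
    linear_combination (x.v.1 - x.v.2.2) * hr + gv_fv hr x.t

lemma phi_psi (x : Kgrp n r hr) : phiFun (psiFun x) = x := by
  refine Kgrp.ext ?_ rfl
  show (r * (-((r + 1) * x.v.1)),
    -(r * ((r + 1) * (x.v.1 + x.v.2.1))) - r * (-((r + 1) * x.v.1)),
    -((r + 1) * (x.v.1 + x.v.2.1)) + r * (-((r + 1) * x.v.1))
      + r * (x.v.1 - r * x.v.2.1 - (r + 1) * x.v.2.2 + gv r x.t) + fv r x.t) = x.v
  refine Prod.ext ?_ (Prod.ext ?_ ?_)
  · show r * (-((r + 1) * x.v.1)) = x.v.1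
    linear_combination (-x.v.1) * hr
  · show -(r * ((r + 1) * (x.v.1 + x.v.2.1))) - r * (-((r + 1) * x.v.1)) = x.v.2.1
    linear_combination (-x.v.2.1) * hr
  · show -((r + 1) * (x.v.1 + x.v.2.1)) + r * (-((r + 1) * x.v.1))
      + r * (x.v.1 - r * x.v.2.1 - (r + 1) * x.v.2.2 + gv r x.t) + fv r x.t = x.v.2.2
    linear_combination (-(x.v.1 + x.v.2.1 + x.v.2.2)) * hr + fv_gv hr x.t

lemma phi_mul (hr : r ^ 2 + r + 1 = 0) (x y : Kgrp n r hr) :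
    phiFun (x * y) = phiFun x * phiFun y := by
  refine Kgrp.ext ?_ rfl
  have hc := fv_cocycle hr x.t y.t
  show (r * (r ^ y.t.val * x.v.2.1 + y.v.2.1),
      -(r * (r ^ y.t.val * x.v.1 + y.v.1)) - r * (r ^ y.t.val * x.v.2.1 + y.v.2.1),
      -(r ^ y.t.val * x.v.1 + y.v.1) + r * (r ^ y.t.val * x.v.2.1 + y.v.2.1)
        + r * (r ^ y.t.val * x.v.2.2 + y.v.2.2) + fv r (x.t + y.t)) =
    (r ^ y.t.val • (phiFun x).v + (phiFun y).v)
  simp only [phiFun, Prod.smul_mk, smul_eq_mul, Prod.mk_add_mk]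
  refine Prod.ext ?_ (Prod.ext ?_ ?_)
  · ring
  · ring
  · show -(r ^ y.t.val * x.v.1 + y.v.1) + r * (r ^ y.t.val * x.v.2.1 + y.v.2.1)
        + r * (r ^ y.t.val * x.v.2.2 + y.v.2.2) + fv r (x.t + y.t) =
      r ^ y.t.val * (-x.v.1 + r * x.v.2.1 + r * x.v.2.2 + fv r x.t)
        + (-y.v.1 + r * y.v.2.1 + r * y.v.2.2 + fv r y.t)
    linear_combination hc

/-- The automorphism. -/
def phiEquiv (n : ℕ) (r : ZMod n) (hr : r ^ 2 + r + 1 = 0) :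
    Kgrp n r hr ≃* Kgrp n r hr where
  toFun := phiFun
  invFun := psiFun
  left_inv := psi_phi
  right_inv := phi_psi
  map_mul' := phi_mul hr

lemma vec_pow (v : ZMod n × ZMod n × ZMod n) (k : ℕ) :
    (⟨v, 0⟩ : Kgrp n r hr) ^ k = ⟨(k : ZMod n) • v, 0⟩ := by
  induction k with
  | zero =>
      refine Kgrp.ext ?_ rfl
      show (0 : ZMod n × ZMod n × ZMod n) = ((0 : ℕ) : ZMod n) • v
      simp
  | succ k ih =>
      rw [pow_succ, ih, mul_def]
      refine Kgrp.ext ?_ rfl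
      show r ^ (0 : ZMod 3).val • ((k : ZMod n) • v) + v = (((k + 1 : ℕ)) : ZMod n) • v
      have : (0 : ZMod 3).val = 0 := rfl
      rw [this, pow_zero, one_smul]
      push_cast
      rw [add_smul, one_smul]

end Kgrp

open Kgrp in
/-- There exists an automorphism of the group `K` sending
`a ↦ b^(−r)·c^(−1)`, `b ↦ a^r·b^(−r)·c^r`, `c ↦ c^r`, `h ↦ h·c^(−r)`,
where `x ^ s` for `s : ZMod n` denotes `x ^ s.val`. -/
theorem stmt3 (n : ℕ) (hn : 7 ≤ n) (r : ZMod n) (hr : r ^ 2 + r + 1 = 0) :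
    ∃ φ : Kgrp n r hr ≃* Kgrp n r hr,
      φ (gena n r hr) = (genb n r hr) ^ (-r).val * (genc n r hr) ^ ((-1 : ZMod n)).val ∧
      φ (genb n r hr) = (gena n r hr) ^ r.val * (genb n r hr) ^ (-r).val * (genc n r hr) ^ r.val ∧
      φ (genc n r hr) = (genc n r hr) ^ r.val ∧
      φ (genh n r hr) = genh n r hr * (genc n r hr) ^ (-r).val := by
  haveI : NeZero n := ⟨by omega⟩
  have key : ∀ a : ZMod n, ((a.val : ZMod n)) = a := fun a => ZMod.natCast_rightInverse a
  refine ⟨phiEquiv n r hr, ?_, ?_, ?_, ?_⟩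
  · show phiFun (gena n r hr) =
      (⟨((0 : ZMod n), 1, 0), 0⟩ : Kgrp n r hr) ^ (-r).val *
        (⟨((0 : ZMod n), 0, 1), (0 : ZMod 3)⟩ : Kgrp n r hr) ^ ((-1 : ZMod n)).val
    rw [vec_pow, vec_pow, mul_def]
    refine Kgrp.ext ?_ rfl
    show (phiFun (gena n r hr)).v = _
    simp [phiFun, gena, fv, key, Prod.ext_iff, ZMod.val_zero]
  · show phiFun (genb n r hr) =
      (⟨((1 : ZMod n), 0, 0), 0⟩ : Kgrp n r hr) ^ r.val *
        (⟨((0 : ZMod n), 1, 0), (0 : ZMod 3)⟩ : Kgrp n r hr) ^ (-r).val *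
        (⟨((0 : ZMod n), 0, 1), (0 : ZMod 3)⟩ : Kgrp n r hr) ^ r.val
    rw [vec_pow, vec_pow, vec_pow, mul_def, mul_def]
    refine Kgrp.ext ?_ rfl
    show (phiFun (genb n r hr)).v = _
    simp [phiFun, genb, fv, key, Prod.ext_iff, ZMod.val_zero]
  · show phiFun (genc n r hr) =
      (⟨((0 : ZMod n), 0, 1), (0 : ZMod 3)⟩ : Kgrp n r hr) ^ r.val
    rw [vec_pow]
    refine Kgrp.ext ?_ rfl
    show (phiFun (genc n r hr)).v = _
    simp [phiFun, genc, fv, key, Prod.ext_iff]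
  · show phiFun (genh n r hr) =
      genh n r hr * (⟨((0 : ZMod n), 0, 1), (0 : ZMod 3)⟩ : Kgrp n r hr) ^ (-r).val
    rw [vec_pow, mul_def]
    refine Kgrp.ext ?_ rfl
    show (phiFun (genh n r hr)).v = _
    simp [phiFun, genh, fv, key, Prod.ext_iff, ZMod.val_zero]
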